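/- Let K ≥ 1 and m ≥ 1, let μ₁, …, μ_K be probability measures on a measurable space S with uniform mixture μ = (1/K)·∑_{r=1}^{K} μ_r, and let ℓ : S → ℝ be measurable with ∫ ℓ² dμ_r < ∞ for each r. Then the RSS variance is no larger than the SRS variance: (1/(K²m))·∑_{r=1}^{K} Var_{μ_r}(ℓ) ≤ (1/(Km))·Var_μ(ℓ), where Var_ν(ℓ) = ∫ ℓ² dν − (∫ ℓ dν)². -/

import Mathlib

open MeasureTheory
open scoped ENNReal

/-- The RSS variance is no larger than the SRS variance.
With `μ` the uniform mixture of the strata `μr r`, and `Var_ν(ℓ) = ∫ ℓ² dν − (∫ ℓ dν)²`,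
we have `(1/(K²m)) ∑_r Var_{μr r}(ℓ) ≤ (1/(Km)) Var_μ(ℓ)`. -/
theorem rss_variance_le_srs_variance
    {S : Type*} [MeasurableSpace S]
    (K m : ℕ) (hK : 1 ≤ K) (hm : 1 ≤ m)
    (μr : Fin K → Measure S) (hprob : ∀ r, IsProbabilityMeasure (μr r))
    (μ : Measure S) (hμ : μ = (K : ℝ≥0∞)⁻¹ • ∑ r, μr r)
    (ℓ : S → ℝ) (hℓ : Measurable ℓ)
    (hsq : ∀ r, Integrable (fun s => ℓ s ^ 2) (μr r)) :
    (1 / ((K : ℝ) ^ 2 * m)) * ∑ r, ((∫ s, ℓ s ^ 2 ∂(μr r)) - (∫ s, ℓ s ∂(μr r)) ^ 2)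
      ≤ (1 / ((K : ℝ) * m)) * ((∫ s, ℓ s ^ 2 ∂μ) - (∫ s, ℓ s ∂μ) ^ 2) := by
  have hK0 : (0:ℝ) < K := by exact_mod_cast hK
  have hm0 : (0:ℝ) < m := by exact_mod_cast hm
  have hint : ∀ r, Integrable ℓ (μr r) := fun r => by
    have h2 : MemLp ℓ 2 (μr r) :=
      (memLp_two_iff_integrable_sq hℓ.aestronglyMeasurable).2 (hsq r)
    exact h2.integrable (by norm_num)
  have hcast : ((K : ℝ≥0∞)⁻¹).toReal = (K : ℝ)⁻¹ := by
    simp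
  have hI1 : (∫ s, ℓ s ∂μ) = (K : ℝ)⁻¹ * ∑ r, ∫ s, ℓ s ∂(μr r) := by
    rw [hμ, integral_smul_measure, integral_finset_sum_measure (fun r _ => hint r), hcast,
      smul_eq_mul]
  have hI2 : (∫ s, ℓ s ^ 2 ∂μ) = (K : ℝ)⁻¹ * ∑ r, ∫ s, ℓ s ^ 2 ∂(μr r) := by
    rw [hμ, integral_smul_measure, integral_finset_sum_measure (fun r _ => hsq r), hcast,
      smul_eq_mul]
  set A := ∑ r, ∫ s, ℓ s ^ 2 ∂(μr r)
  set B := ∑ r, ∫ s, ℓ s ∂(μr r) with hB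
  have hCS : B ^ 2 ≤ K * ∑ r, (∫ s, ℓ s ∂(μr r)) ^ 2 := by
    have := sq_sum_le_card_mul_sum_sq
      (s := (Finset.univ : Finset (Fin K))) (f := fun r => ∫ s, ℓ s ∂(μr r))
    simpa using this
  rw [hI1, hI2, Finset.sum_sub_distrib]
  rw [div_mul_eq_mul_div, div_mul_eq_mul_div, one_mul, one_mul, div_le_div_iff₀ (by positivity)
    (by positivity)]
  have hexp : (A - ∑ r, (∫ s, ℓ s ∂(μr r)) ^ 2) * ((K:ℝ) * m)
      ≤ ((K:ℝ)⁻¹ * A - ((K:ℝ)⁻¹ * B) ^ 2) * ((K:ℝ)^2 * m) := by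
    have hKne : (K:ℝ) ≠ 0 := ne_of_gt hK0
    have h1 : ((K:ℝ)⁻¹ * A - ((K:ℝ)⁻¹ * B) ^ 2) * ((K:ℝ)^2 * m)
        = (K * A - B ^ 2) * m := by field_simp
    have h2 : (A - ∑ r, (∫ s, ℓ s ∂(μr r)) ^ 2) * ((K:ℝ) * m)
        = (K * A - K * ∑ r, (∫ s, ℓ s ∂(μr r)) ^ 2) * m := by ring
    rw [h1, h2]
    have : K * A - K * ∑ r, (∫ s, ℓ s ∂(μr r)) ^ 2 ≤ K * A - B ^ 2 := by
      nlinarith [hCS]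
    nlinarith [this, hm0]
  exact hexp
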